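/- Let α < 0 < β, and let (ε₁, ε₃) be the unique pair of reals satisfying ε₃ − ε₁ = α + β and h(ε₁) + h(ε₃) = h(α) + h(β). Then ε₁ ≤ 0 and |ε₁| ≤ c(α)·min{|α|, |β|}, where c(z) = (cosh z − 1)/(cosh z + 1). -/

import Mathlib

/-- The function `h` from the paper: `h ε = ε` if `ε ≥ 0`, `h ε = sinh ε` otherwise. -/
noncomputable def hFun (ε : ℝ) : ℝ := if 0 ≤ ε then ε else Real.sinh ε

/-- The damping coefficient `c(z) = (cosh z − 1)/(cosh z + 1)`. -/
noncomputable def cFun (z : ℝ) : ℝ := (Real.cosh z - 1) / (Real.cosh z + 1)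

lemma hFun_of_nonneg {x : ℝ} (hx : 0 ≤ x) : hFun x = x := if_pos hx

lemma hFun_of_nonpos {x : ℝ} (hx : x ≤ 0) : hFun x = Real.sinh x := by
  unfold hFun
  rcases eq_or_lt_of_le hx with h | h
  · simp [h]
  · rw [if_neg (not_le.mpr h)]

lemma hFun_strictMono : StrictMono hFun := by
  intro x y hxy
  rcases le_or_gt 0 x with hx | hx
  · rw [hFun_of_nonneg hx, hFun_of_nonneg (hx.trans hxy.le)]; exact hxy
  · rw [hFun_of_nonpos hx.le]
    rcases le_or_gt 0 y with hy | hy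
    · rw [hFun_of_nonneg hy]
      have : Real.sinh x < 0 := Real.sinh_neg_iff.mpr hx
      linarith
    · rw [hFun_of_nonpos hy.le]
      exact Real.sinh_lt_sinh.mpr hxy

/-- Mean-value type bound: `sinh u - sinh v ≤ (u - v) cosh u` for `0 ≤ v ≤ u`. -/
lemma sinh_sub_le_mul_cosh {u v : ℝ} (hv : 0 ≤ v) (hvu : v ≤ u) :
    Real.sinh u - Real.sinh v ≤ (u - v) * Real.cosh u := by
  have hd : ∀ x : ℝ, HasDerivAt (fun t => Real.cosh u * t - Real.sinh t)
      (Real.cosh u - Real.cosh x) x := fun x => by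
    exact (((hasDerivAt_id x).const_mul (Real.cosh u)).sub (Real.hasDerivAt_sinh x)).congr_deriv (by ring)
  have hmono : MonotoneOn (fun t => Real.cosh u * t - Real.sinh t) (Set.Icc 0 u) := by
    apply monotoneOn_of_hasDerivWithinAt_nonneg (convex_Icc 0 u)
      (fun x _ => (hd x).continuousAt.continuousWithinAt)
      (fun x _ => (hd x).hasDerivWithinAt)
    intro x hx
    rw [interior_Icc, Set.mem_Ioo] at hx
    have : Real.cosh x ≤ Real.cosh u := by
      rw [Real.cosh_le_cosh, abs_of_pos hx.1, abs_of_pos (hx.1.trans hx.2)]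
      exact hx.2.le
    linarith
  have := hmono (Set.mem_Icc.mpr ⟨hv, hvu⟩) (Set.mem_Icc.mpr ⟨hv.trans hvu, le_rfl⟩) hvu
  simp only at this
  nlinarith [this]

/-- Interaction of a 3-shock α < 0 and a 3-rarefaction β > 0: the reflected 1-wave ε₁
is a shock whose size is damped by the factor c(α). -/
theorem statement7 (α β ε₁ ε₃ : ℝ) (hαβ : α < 0 ∧ 0 < β)
    (h1 : ε₃ - ε₁ = α + β)
    (h2 : hFun ε₁ + hFun ε₃ = hFun α + hFun β) :
    ε₁ ≤ 0 ∧ |ε₁| ≤ cFun α * min |α| |β| := by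
  obtain ⟨hα, hβ⟩ := hαβ
  have hco1 : (1:ℝ) ≤ Real.cosh α := Real.one_le_cosh α
  have hden : (0:ℝ) < Real.cosh α + 1 := by linarith
  set c : ℝ := cFun α with hc
  have hceq : c = (Real.cosh α - 1) / (Real.cosh α + 1) := rfl
  have hc0 : 0 ≤ c := div_nonneg (by linarith) hden.le
  have hc1 : c ≤ 1 := by rw [hceq, div_le_one hden]; linarith
  set a : ℝ := -α with ha
  have ha0 : 0 < a := by simp [ha]; linarith
  have hcosha : Real.cosh a = Real.cosh α := by rw [ha, Real.cosh_neg]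
  set m : ℝ := min a β with hm
  have hm0 : 0 < m := lt_min ha0 hβ
  have hma : m ≤ a := min_le_left _ _
  have hmβ : m ≤ β := min_le_right _ _
  have hcm0 : 0 ≤ c * m := mul_nonneg hc0 hm0.le
  -- the strictly monotone interaction function
  have hF : StrictMono (fun t => hFun t + hFun (t + (α + β))) := fun x y hxy =>
    add_lt_add (hFun_strictMono hxy) (hFun_strictMono (by linarith))
  have hε₃ : ε₃ = ε₁ + (α + β) := by linarith
  have hFε : hFun ε₁ + hFun (ε₁ + (α + β)) = hFun α + hFun β := by rw [← hε₃]; exact h2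
  -- first part: ε₁ ≤ 0
  have hpart1 : ε₁ ≤ 0 := by
    have hle : hFun α + hFun β ≤ hFun 0 + hFun (0 + (α + β)) := by
      rw [hFun_of_nonpos hα.le, hFun_of_nonneg hβ.le, hFun_of_nonneg le_rfl, zero_add, zero_add]
      rcases le_or_gt 0 (α + β) with h | h
      · rw [hFun_of_nonneg h]
        have := Real.sinh_le_self_iff.mpr hα.le
        linarith
      · rw [hFun_of_nonpos h.le]
        have hmono := Real.sinh_sub_id_strictMono.monotone (show α ≤ α + β by linarith)
        linarith
    by_contra hcon
    push_neg at hcon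
    have := hF (show (0:ℝ) < ε₁ from hcon)
    simp only at this
    rw [hFε] at this
    linarith
  refine ⟨hpart1, ?_⟩
  -- key inequality: F(-(c*m)) ≤ hFun α + hFun β
  have hkey : hFun (-(c * m)) + hFun (-(c * m) + (α + β)) ≤ hFun α + hFun β := by
    rw [hFun_of_nonpos (neg_nonpos.mpr hcm0), Real.sinh_neg,
      hFun_of_nonpos hα.le, hFun_of_nonneg hβ.le]
    have harg : -(c * m) + (α + β) = β - a - c * m := by rw [ha]; ring
    rw [harg]
    have hsinhα : Real.sinh α = -Real.sinh a := by rw [ha, Real.sinh_neg, neg_neg]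
    rw [hsinhα]
    -- goal: -sinh (c*m) + hFun (β - a - c*m) ≤ -sinh a + β
    rcases le_total a β with hab | hab
    · -- m = a
      have hmval : m = a := min_eq_left hab
      have hKa : Real.sinh a - Real.sinh (c * a) ≤ (a - c * a) * Real.cosh a :=
        sinh_sub_le_mul_cosh (mul_nonneg hc0 ha0.le)
          (by nlinarith)
      have hprod : (a - c * a) * Real.cosh a = a + c * a := by
        rw [hceq, hcosha]; field_simp; ring
      have hdag : Real.sinh a ≤ Real.sinh (c * a) + a + c * a := by
        rw [hprod] at hKa; linarith
      rw [hmval]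
      rcases le_or_gt 0 (β - a - c * a) with hpos | hneg
      · rw [hFun_of_nonneg hpos]; linarith
      · rw [hFun_of_nonpos hneg.le]
        have hts : β - a - c * a = -(a + c * a - β) := by ring
        rw [hts, Real.sinh_neg]
        have ht0 : 0 ≤ a + c * a - β := by linarith
        have := Real.self_le_sinh_iff.mpr ht0
        linarith
    · -- m = β
      have hmval : m = β := min_eq_right hab
      rw [hmval]
      set v : ℝ := a - β + c * β with hv
      have hv0 : 0 ≤ v := by rw [hv]; nlinarith
      have hva : v ≤ a := by rw [hv]; nlinarith
      have hKv : Real.sinh a - Real.sinh v ≤ (a - v) * Real.cosh a :=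
        sinh_sub_le_mul_cosh hv0 hva
      have hprod : (a - v) * Real.cosh a = β + c * β := by
        rw [hv, hceq, hcosha]; field_simp; ring
      rw [hprod] at hKv
      have harg2 : β - a - c * β = -v := by rw [hv]; ring
      rw [harg2, hFun_of_nonpos (by linarith), Real.sinh_neg]
      have hsβ : c * β ≤ Real.sinh (c * β) :=
        Real.self_le_sinh_iff.mpr (mul_nonneg hc0 hβ.le)
      linarith
  -- conclude via monotonicity
  rw [← hFε] at hkey
  have hle : -(c * m) ≤ ε₁ := hF.le_iff_le.mp hkey
  have habs : |ε₁| = -ε₁ := abs_of_nonpos hpart1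
  have hmin : min |α| |β| = m := by
    rw [abs_of_neg hα, abs_of_pos hβ, hm, ha]
  rw [habs, hmin]
  linarith
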